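/- Let q be a prime power with q - 1 = 4k + R for some k ≥ 1 and R ∈ {1,...,5}. Then the mixed graph H_q is totally regular with parameters [k, q]: every vertex has exactly q incident edges, exactly k out-going arcs, and exactly k in-coming arcs. -/
import Mathlib


open Sum

/-- Vertices of `H_q` (= vertices of `G_q`): points `(x,y)` with `x ∈ F*`, points `P_m`,
lines `[m,b]` with `m ∈ F*`, and lines `L_x`. -/
abbrev Vtx (F : Type) [Field F] : Type := (Fˣ × F ⊕ Fˣ) ⊕ (Fˣ × F ⊕ Fˣ)

/-- Edges of `G_q ⊆ H_q`: `(x,y) ~ [m,b]` iff `y = m x + b`; `(x,y) ~ L_x`;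
`[m,b] ~ P_m`. -/
def HEdge {F : Type} [Field F] : Vtx F → Vtx F → Prop
  | inl (inl (x, y)), inr (inl (m, b)) => y = (m : F) * x + b
  | inr (inl (m, b)), inl (inl (x, y)) => y = (m : F) * x + b
  | inl (inl (x, _)), inr (inr x') => x = x'
  | inr (inr x'), inl (inl (x, _)) => x = x'
  | inl (inr m), inr (inl (m', _)) => m = m'
  | inr (inl (m', _)), inl (inr m) => m = m'
  | _, _ => False

/-- Arcs of `H_q`, given a primitive element `ξ` and jumps `i ∈ {1,…,k}`:
`((x,y),(xξ^i,y))`, `(L_x, L_{xξ^i})`, `([m,b],[m/ξ^i,b])`, `(P_m, P_{m/ξ^i})`. -/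
def HArc {F : Type} [Field F] (ξ : Fˣ) (k : ℕ) : Vtx F → Vtx F → Prop
  | inl (inl (x, y)), inl (inl (x', y')) =>
      y = y' ∧ ∃ i : ℕ, 1 ≤ i ∧ i ≤ k ∧ x' = x * ξ ^ i
  | inr (inr x), inr (inr x') => ∃ i : ℕ, 1 ≤ i ∧ i ≤ k ∧ x' = x * ξ ^ i
  | inr (inl (m, b)), inr (inl (m', b')) =>
      b = b' ∧ ∃ i : ℕ, 1 ≤ i ∧ i ≤ k ∧ m' = m * (ξ ^ i)⁻¹
  | inl (inr m), inl (inr m') => ∃ i : ℕ, 1 ≤ i ∧ i ≤ k ∧ m' = m * (ξ ^ i)⁻¹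
  | _, _ => False

/-- A mixed cycle of length `ℓ` in `H_q`: an injective cyclic sequence of vertices where
each step is an arc (traversed forwards) or an edge; a closed walk of length 2 using the
same edge twice is not a cycle. -/
def IsMixedCycle {F : Type} [Field F] (ξ : Fˣ) (k ℓ : ℕ) (f : ZMod ℓ → Vtx F) : Prop :=
  Function.Injective f ∧
    ∃ s : ZMod ℓ → Bool,
      (∀ t : ZMod ℓ, if s t then HArc ξ k (f t) (f (t + 1)) else HEdge (f t) (f (t + 1))) ∧
      (ℓ = 2 → s 0 = true ∨ s 1 = true)

section Aux

lemma count_opt {α F : Type} [Field F] [Fintype F]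
    (P : α → Prop) (a0 : α) (g : Fˣ → α)
    (h : ∀ a, P a ↔ a = a0 ∨ ∃ m : Fˣ, a = g m)
    (h0 : ∀ m, g m ≠ a0) (hg : Function.Injective g) :
    Nat.card {a // P a} = Fintype.card F := by
  classical
  have hb : Function.Bijective (fun o : Option Fˣ =>
      (Option.elim o ⟨a0, (h a0).2 (Or.inl rfl)⟩
        (fun m => ⟨g m, (h _).2 (Or.inr ⟨m, rfl⟩)⟩) : {a // P a})) := by
    constructor
    · rintro (_|m) (_|m') hmm
      · rfl
      · exact absurd (congrArg Subtype.val hmm).symm (h0 m')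
      · exact absurd (congrArg Subtype.val hmm) (h0 m)
      · exact congrArg some (hg (congrArg Subtype.val hmm))
    · rintro ⟨a, ha⟩
      rcases (h a).1 ha with rfl | ⟨m, rfl⟩
      · exact ⟨none, rfl⟩
      · exact ⟨some m, rfl⟩
  rw [Nat.card_congr (Equiv.ofBijective _ hb).symm, Nat.card_eq_fintype_card,
    Fintype.card_option, Fintype.card_units]
  have : 0 < Fintype.card F := Fintype.card_pos
  omega

lemma count_all {α F : Type} [Field F] [Fintype F]
    (P : α → Prop) (g : F → α)
    (h : ∀ a, P a ↔ ∃ b : F, a = g b) (hg : Function.Injective g) :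
    Nat.card {a // P a} = Fintype.card F := by
  have hb : Function.Bijective (fun b : F => (⟨g b, (h _).2 ⟨b, rfl⟩⟩ : {a // P a})) := by
    constructor
    · intro b b' hbb; exact hg (congrArg Subtype.val hbb)
    · rintro ⟨a, ha⟩; rcases (h a).1 ha with ⟨b, rfl⟩; exact ⟨b, rfl⟩
  rw [Nat.card_congr (Equiv.ofBijective _ hb).symm, Nat.card_eq_fintype_card]

lemma count_icc {α : Type} (k : ℕ) (P : α → Prop) (g : ℕ → α)
    (h : ∀ a, P a ↔ ∃ i : ℕ, 1 ≤ i ∧ i ≤ k ∧ a = g i)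
    (hg : ∀ i j : ℕ, 1 ≤ i → i ≤ k → 1 ≤ j → j ≤ k → g i = g j → i = j) :
    Nat.card {a // P a} = k := by
  have hb : Function.Bijective (fun i : Finset.Icc 1 k =>
      (⟨g i, (h _).2 ⟨i, (Finset.mem_Icc.1 i.2).1, (Finset.mem_Icc.1 i.2).2, rfl⟩⟩ :
        {a // P a})) := by
    constructor
    · rintro ⟨i, hi⟩ ⟨j, hj⟩ hij
      have hi' := Finset.mem_Icc.1 hi; have hj' := Finset.mem_Icc.1 hj
      exact Subtype.ext (hg i j hi'.1 hi'.2 hj'.1 hj'.2 (congrArg Subtype.val hij))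
    · rintro ⟨a, ha⟩
      rcases (h a).1 ha with ⟨i, h1, h2, rfl⟩
      exact ⟨⟨i, Finset.mem_Icc.2 ⟨h1, h2⟩⟩, rfl⟩
  rw [Nat.card_congr (Equiv.ofBijective _ hb).symm, Nat.card_eq_fintype_card,
    Fintype.card_coe, Nat.card_Icc]
  omega

end Aux

theorem Hq_totally_regular' (q k R : ℕ) (hq : IsPrimePow q)
    (F : Type) [Field F] [Fintype F] (hcard : Fintype.card F = q)
    (ξ : Fˣ) (hξ : ∀ a : Fˣ, a ∈ Subgroup.zpowers ξ)
    (hk : 1 ≤ k) (hR1 : 1 ≤ R) (hR5 : R ≤ 5) (hqk : q - 1 = 4 * k + R) :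
    ∀ v : Vtx F,
      Nat.card {w : Vtx F // HEdge v w} = q ∧
      Nat.card {w : Vtx F // HArc ξ k v w} = k ∧
      Nat.card {w : Vtx F // HArc ξ k w v} = k := by
  have hq2 : 2 ≤ q := hq.two_le
  have hord : orderOf ξ = q - 1 := by
    rw [orderOf_eq_card_of_forall_mem_zpowers hξ, Nat.card_units, Nat.card_eq_fintype_card,
      hcard]
  have hpow : ∀ i j : ℕ, 1 ≤ i → i ≤ k → 1 ≤ j → j ≤ k → ξ ^ i = ξ ^ j → i = j := by
    intro i j h1 h2 h3 h4 hij
    exact pow_injOn_Iio_orderOf (by simp [hord]; omega) (by simp [hord]; omega) hij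
  rintro ((⟨x, y⟩ | m) | (⟨m, b⟩ | x))
  · refine ⟨?_, ?_, ?_⟩
    · rw [← hcard]
      apply count_opt _ (inr (inr x) : Vtx F) (fun m => inr (inl (m, y - m * x)))
      · rintro ((⟨x', y'⟩ | m') | (⟨m', b'⟩ | x')) <;> simp [HEdge]
        · constructor <;> (rintro rfl; ring)
        · exact eq_comm
      · intro m; simp
      · intro m m' hmm; simpa using (by simpa using hmm : m = m' ∧ _).1
    · apply count_icc k _ (fun i => (inl (inl (x * ξ ^ i, y)) : Vtx F))
      · rintro ((⟨x', y'⟩ | m') | (⟨m', b'⟩ | x')) <;> simp [HArc]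
        constructor
        · rintro ⟨rfl, i, h1, h2, rfl⟩; exact ⟨i, h1, h2, rfl, rfl⟩
        · rintro ⟨i, h1, h2, rfl, rfl⟩; exact ⟨rfl, i, h1, h2, rfl⟩
      · intro i j h1 h2 h3 h4 hij
        simp only [Sum.inl.injEq, Prod.mk.injEq] at hij
        exact hpow i j h1 h2 h3 h4 (mul_left_cancel hij.1)
    · apply count_icc k _ (fun i => (inl (inl (x * (ξ ^ i)⁻¹, y)) : Vtx F))
      · rintro ((⟨x', y'⟩ | m') | (⟨m', b'⟩ | x')) <;> simp [HArc]
        constructor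
        · rintro ⟨rfl, i, h1, h2, rfl⟩
          exact ⟨i, h1, h2, by group, rfl⟩
        · rintro ⟨i, h1, h2, rfl, rfl⟩
          exact ⟨rfl, i, h1, h2, by group⟩
      · intro i j h1 h2 h3 h4 hij
        simp only [Sum.inl.injEq, Prod.mk.injEq] at hij
        exact hpow i j h1 h2 h3 h4 (inv_injective (mul_left_cancel hij.1))
  · refine ⟨?_, ?_, ?_⟩
    · rw [← hcard]
      apply count_all _ (fun b : F => (inr (inl (m, b)) : Vtx F))
      · rintro ((⟨x', y'⟩ | m') | (⟨m', b'⟩ | x')) <;> simp [HEdge]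
        constructor
        · rintro rfl; rfl
        · rintro rfl; rfl
      · intro b b' hbb; simpa using (by simpa using hbb : m = m ∧ b = b').2
    · apply count_icc k _ (fun i => (inl (inr (m * (ξ ^ i)⁻¹)) : Vtx F))
      · rintro ((⟨x', y'⟩ | m') | (⟨m', b'⟩ | x')) <;> simp [HArc]
      · intro i j h1 h2 h3 h4 hij
        simp only [Sum.inl.injEq, Sum.inr.injEq] at hij
        exact hpow i j h1 h2 h3 h4 (inv_injective (mul_left_cancel hij))
    · apply count_icc k _ (fun i => (inl (inr (m * ξ ^ i)) : Vtx F))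
      · rintro ((⟨x', y'⟩ | m') | (⟨m', b'⟩ | x')) <;> simp [HArc]
        constructor
        · rintro ⟨i, h1, h2, rfl⟩
          exact ⟨i, h1, h2, by group⟩
        · rintro ⟨i, h1, h2, rfl⟩
          exact ⟨i, h1, h2, by group⟩
      · intro i j h1 h2 h3 h4 hij
        simp only [Sum.inl.injEq, Sum.inr.injEq] at hij
        exact hpow i j h1 h2 h3 h4 (mul_left_cancel hij)
  · refine ⟨?_, ?_, ?_⟩
    · rw [← hcard]
      apply count_opt _ (inl (inr m) : Vtx F)
        (fun x : Fˣ => (inl (inl (x, (m : F) * x + b)) : Vtx F))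
      · rintro ((⟨x', y'⟩ | m') | (⟨m', b'⟩ | x')) <;> simp [HEdge]
      · intro x'; simp
      · intro x1 x2 hxx
        simpa using (by simpa using hxx : x1 = x2 ∧ _).1
    · apply count_icc k _ (fun i => (inr (inl (m * (ξ ^ i)⁻¹, b)) : Vtx F))
      · rintro ((⟨x', y'⟩ | m') | (⟨m', b'⟩ | x')) <;> simp [HArc]
        constructor
        · rintro ⟨rfl, i, h1, h2, rfl⟩; exact ⟨i, h1, h2, rfl, rfl⟩
        · rintro ⟨i, h1, h2, rfl, rfl⟩; exact ⟨rfl, i, h1, h2, rfl⟩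
      · intro i j h1 h2 h3 h4 hij
        simp only [Sum.inr.injEq, Sum.inl.injEq, Prod.mk.injEq] at hij
        exact hpow i j h1 h2 h3 h4 (inv_injective (mul_left_cancel hij.1))
    · apply count_icc k _ (fun i => (inr (inl (m * ξ ^ i, b)) : Vtx F))
      · rintro ((⟨x', y'⟩ | m') | (⟨m', b'⟩ | x')) <;> simp [HArc]
        constructor
        · rintro ⟨rfl, i, h1, h2, rfl⟩
          exact ⟨i, h1, h2, by group, rfl⟩
        · rintro ⟨i, h1, h2, rfl, rfl⟩
          exact ⟨rfl, i, h1, h2, by group⟩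
      · intro i j h1 h2 h3 h4 hij
        simp only [Sum.inr.injEq, Sum.inl.injEq, Prod.mk.injEq] at hij
        exact hpow i j h1 h2 h3 h4 (mul_left_cancel hij.1)
  · refine ⟨?_, ?_, ?_⟩
    · rw [← hcard]
      apply count_all _ (fun y : F => (inl (inl (x, y)) : Vtx F))
      · rintro ((⟨x', y'⟩ | m') | (⟨m', b'⟩ | x')) <;> simp [HEdge]
      · intro b b' hbb; simpa using (by simpa using hbb : x = x ∧ b = b').2
    · apply count_icc k _ (fun i => (inr (inr (x * ξ ^ i)) : Vtx F))
      · rintro ((⟨x', y'⟩ | m') | (⟨m', b'⟩ | x')) <;> simp [HArc]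
      · intro i j h1 h2 h3 h4 hij
        simp only [Sum.inr.injEq] at hij
        exact hpow i j h1 h2 h3 h4 (mul_left_cancel hij)
    · apply count_icc k _ (fun i => (inr (inr (x * (ξ ^ i)⁻¹)) : Vtx F))
      · rintro ((⟨x', y'⟩ | m') | (⟨m', b'⟩ | x')) <;> simp [HArc]
        constructor
        · rintro ⟨i, h1, h2, rfl⟩
          exact ⟨i, h1, h2, by group⟩
        · rintro ⟨i, h1, h2, rfl⟩
          exact ⟨i, h1, h2, by group⟩
      · intro i j h1 h2 h3 h4 hij
        simp only [Sum.inr.injEq] at hij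
        exact hpow i j h1 h2 h3 h4 (inv_injective (mul_left_cancel hij))


/-- `H_q` is a totally regular mixed graph with parameters `[k, q]`: every vertex has
exactly `q` incident edges, `k` out-going arcs and `k` in-coming arcs. -/
theorem Hq_totally_regular (q k R : ℕ) (hq : IsPrimePow q)
    (F : Type) [Field F] [Fintype F] (hcard : Fintype.card F = q)
    (ξ : Fˣ) (hξ : ∀ a : Fˣ, a ∈ Subgroup.zpowers ξ)
    (hk : 1 ≤ k) (hR1 : 1 ≤ R) (hR5 : R ≤ 5) (hqk : q - 1 = 4 * k + R) :
    ∀ v : Vtx F,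
      Nat.card {w : Vtx F // HEdge v w} = q ∧
      Nat.card {w : Vtx F // HArc ξ k v w} = k ∧
      Nat.card {w : Vtx F // HArc ξ k w v} = k :=
  Hq_totally_regular' q k R hq F hcard ξ hξ hk hR1 hR5 hqk
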